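/- Fix θ > 0 and let g(x,y) = Re(ln Γ(x+iy)) + f_θ x - (κ_θ/2)(x²-y²) with κ_θ = Ψ'(θ), f_θ = θΨ'(θ) - Ψ(θ). Then for every fixed x ≥ θ, the function y ↦ g(x,y) is strictly increasing on (0,∞); moreover ∂g/∂y (x,y) = Σ_{n=0}^∞ ( y/(θ+n)² - y/((x+n)²+y²) ), which vanishes at y = 0 and is strictly positive for y > 0. -/

import Mathlib

open Filter Topology Finset

/-- The digamma function `Ψ(x) = d/dx ln Γ(x)`. -/
noncomputable def digamma (x : ℝ) : ℝ := deriv (fun t => Real.log (Real.Gamma t)) x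

/-- `κ_θ = Ψ'(θ)`. -/
noncomputable def kappa (θ : ℝ) : ℝ := deriv digamma θ

/-- `f_θ = θΨ'(θ) - Ψ(θ)`. -/
noncomputable def fTheta (θ : ℝ) : ℝ := θ * deriv digamma θ - digamma θ

/-- `g(x,y) = Re(ln Γ(x+iy)) + f_θ x - (κ_θ/2)(x² - y²)`. -/
noncomputable def gFun (θ x y : ℝ) : ℝ :=
  (Complex.log (Complex.Gamma ((x : ℂ) + (y : ℂ) * Complex.I))).re
    + fTheta θ * x - kappa θ / 2 * (x ^ 2 - y ^ 2)



lemma summable_inv_sq {c : ℝ} (hc : 0 < c) : Summable (fun k : ℕ => 1 / (c + k) ^ 2) := by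
  have hm : 0 < min c 1 := lt_min hc one_pos
  have key : Summable (fun k : ℕ => (1 / (min c 1) ^ 2) * (1 / ((k : ℝ) + 1) ^ 2)) := by
    apply Summable.mul_left
    have : Summable (fun k : ℕ => 1 / ((k : ℝ)) ^ 2) := by
      simpa using Real.summable_one_div_nat_pow.mpr one_lt_two
    have := (summable_nat_add_iff 1).mpr this
    simpa using this
  refine Summable.of_nonneg_of_le (fun k => by positivity) (fun k => ?_) key
  have hnn : (0:ℝ) ≤ (k:ℝ) := Nat.cast_nonneg k
  have hk : min c 1 * ((k : ℝ) + 1) ≤ c + k := by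
    have h1 : min c 1 ≤ c := min_le_left _ _
    have h2 : min c 1 ≤ 1 := min_le_right _ _
    nlinarith
  have hsq : (min c 1)^2 * ((k:ℝ)+1)^2 ≤ (c+k)^2 := by
    have := pow_le_pow_left₀ (by positivity) hk 2
    rwa [mul_pow] at this
  rw [one_div_mul_one_div]
  exact one_div_le_one_div_of_le (by positivity) hsq

lemma log_abs_complex (w : ℂ) :
    Real.log ‖w‖ = (1/2) * Real.log (w.re^2 + w.im^2) := by
  have h : w.re^2 + w.im^2 = ‖w‖^2 := by
    rw [Complex.sq_norm, Complex.normSq_apply]; ring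
  rw [h, Real.log_pow]; push_cast; ring

lemma log_abs_gammaSeq (x y : ℝ) (hx : 0 < x) (n : ℕ) (hn : 1 ≤ n) :
    Real.log ‖Complex.GammaSeq ((x:ℂ) + (y:ℂ) * Complex.I) n‖
      = x * Real.log n + Real.log (n.factorial : ℝ)
        - ∑ k ∈ range (n+1), (1/2) * Real.log ((x+k)^2 + y^2) := by
  set z : ℂ := (x:ℂ) + (y:ℂ) * Complex.I with hz
  have hzre : ∀ j : ℕ, (z + j).re = x + j := by intro j; simp [hz]
  have hzim : ∀ j : ℕ, (z + j).im = y := by intro j; simp [hz]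
  have hne : ∀ j ∈ range (n+1), ‖z + j‖ ≠ 0 := by
    intro j _
    rw [norm_ne_zero_iff]
    intro h
    have := congrArg Complex.re h
    rw [hzre] at this
    simp at this
    have : (0:ℝ) < x + j := by positivity
    linarith
  have hnpos : (0:ℝ) < n := by exact_mod_cast hn
  rw [Complex.GammaSeq, norm_div, norm_mul, Complex.norm_natCast, norm_prod,
      show ((n:ℕ):ℂ) = ((n:ℝ):ℂ) by push_cast; rfl]
  rw [Real.log_div (mul_ne_zero (by
        rw [Complex.norm_cpow_eq_rpow_re_of_pos hnpos]
        exact (Real.rpow_pos_of_pos hnpos _).ne')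
      (Nat.cast_ne_zero.mpr n.factorial_ne_zero)) (Finset.prod_ne_zero_iff.mpr hne),
      Real.log_mul (by
        rw [Complex.norm_cpow_eq_rpow_re_of_pos hnpos]
        exact (Real.rpow_pos_of_pos hnpos _).ne')
      (Nat.cast_ne_zero.mpr n.factorial_ne_zero),
      Complex.norm_cpow_eq_rpow_re_of_pos hnpos, Real.log_prod hne]
  have hre : z.re = x := by simp [hz]
  rw [hre, Real.log_rpow hnpos]
  congr 1
  apply Finset.sum_congr rfl
  intro j _
  rw [log_abs_complex, hzre, hzim]

lemma tuo_shift {α : Type*} {F : ℕ → α → ℝ} {g : α → ℝ} {s : Set α}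
    (h : TendstoUniformlyOn F g atTop s) :
    TendstoUniformlyOn (fun n => F (n+1)) g atTop s :=
  fun u hu => (tendsto_add_atTop_nat 1).eventually (h u hu)

lemma hasDerivAt_log_abs_Gamma (x : ℝ) (hx : 0 < x) (y : ℝ) :
    HasDerivAt (fun t : ℝ => Real.log ‖Complex.Gamma ((x:ℂ) + (t:ℂ) * Complex.I)‖)
      (∑' k : ℕ, -(y / ((x + k) ^ 2 + y ^ 2))) y := by
  set R : ℝ := |y| + 1 with hR
  set s : Set ℝ := Metric.ball (0:ℝ) R with hs
  have hys : y ∈ s := by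
    simp only [hs, Metric.mem_ball, Real.dist_eq, sub_zero, hR]
    linarith [abs_nonneg y]
  set F : ℕ → ℝ → ℝ := fun n t => x * Real.log n + Real.log (n.factorial : ℝ)
        - ∑ k ∈ range (n+1), (1/2) * Real.log ((x+k)^2 + t^2) with hF
  set F' : ℕ → ℝ → ℝ := fun n t => ∑ k ∈ range (n+1), -(t / ((x+k)^2 + t^2)) with hF'
  set g' : ℝ → ℝ := fun t => ∑' k : ℕ, -(t / ((x + k) ^ 2 + t ^ 2)) with hg'
  have hupos : ∀ (k : ℕ) (t : ℝ), (0:ℝ) < (x+k)^2 + t^2 := fun k t => by positivity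
  have hf : ∀ n : ℕ, ∀ t ∈ s, HasDerivAt (F n) (F' n t) t := by
    intro n t _
    have hsum : HasDerivAt (fun t : ℝ => ∑ k ∈ range (n+1), (1/2) * Real.log ((x+k)^2 + t^2))
        (∑ k ∈ range (n+1), (1/2) * (2*t / ((x+k)^2 + t^2))) t := by
      apply HasDerivAt.fun_sum
      intro k _
      have h1 : HasDerivAt (fun t : ℝ => (x+k)^2 + t^2) (2*t) t := by
        simpa using ((hasDerivAt_pow 2 t).const_add ((x+(k:ℝ))^2))
      exact (h1.log (hupos k t).ne').const_mul (1/2)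
    have := hsum.const_sub (x * Real.log n + Real.log (n.factorial : ℝ))
    refine this.congr_deriv ?_
    rw [hF', ← Finset.sum_neg_distrib]
    apply Finset.sum_congr rfl
    intro k _
    ring
  have hf' : TendstoUniformlyOn F' g' atTop s := by
    have base : TendstoUniformlyOn (fun n t => ∑ k ∈ range n, -(t / ((x+k)^2 + t^2))) g' atTop s := by
      apply tendstoUniformlyOn_tsum_nat ((summable_inv_sq hx).mul_left R)
      intro k t ht
      have h1 : |t| < R := by simpa [hs, Metric.mem_ball, Real.dist_eq] using ht
      have h2 : (x+(k:ℝ))^2 ≤ (x+k)^2 + t^2 := by nlinarith [sq_nonneg t]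
      rw [norm_neg, Real.norm_eq_abs, abs_div, abs_of_pos (hupos k t)]
      calc |t| / ((x+k)^2 + t^2) ≤ R / ((x+k)^2) := by
              apply div_le_div₀ (by positivity) h1.le (by positivity) h2
        _ = R * (1 / (x+k)^2) := by ring
    exact tuo_shift base
  have hfg : ∀ t ∈ s, Tendsto (fun n => F n t) atTop
      (𝓝 (Real.log ‖Complex.Gamma ((x:ℂ) + (t:ℂ) * Complex.I)‖)) := by
    intro t _
    set z : ℂ := (x:ℂ) + (t:ℂ) * Complex.I with hz
    have hΓ : Complex.Gamma z ≠ 0 := by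
      apply Complex.Gamma_ne_zero
      intro m h
      have := congrArg Complex.re h
      simp [hz] at this
      have : (0:ℝ) ≤ (m:ℝ) := Nat.cast_nonneg m
      linarith
    have h1 : Tendsto (fun n => Real.log ‖Complex.GammaSeq z n‖) atTop
        (𝓝 (Real.log ‖Complex.Gamma z‖)) := by
      apply (Real.continuousAt_log (by simpa using hΓ)).tendsto.comp
      exact (continuous_norm.tendsto _).comp (Complex.GammaSeq_tendsto_Gamma z)
    apply h1.congr'
    filter_upwards [eventually_ge_atTop 1] with n hn
    exact log_abs_gammaSeq x t hx n hn
  have key := hasDerivAt_of_tendstoUniformlyOn Metric.isOpen_ball hf' (Eventually.of_forall hf) hfg hys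
  exact key

lemma tuo_const_add {c : ℕ → ℝ} {c0 : ℝ} (hc : Tendsto c atTop (𝓝 c0))
    {S : ℕ → ℝ → ℝ} {g : ℝ → ℝ} {s : Set ℝ} (h : TendstoUniformlyOn S g atTop s) :
    TendstoUniformlyOn (fun n t => c n + S n t) (fun t => c0 + g t) atTop s := by
  have hcu : TendstoUniformlyOn (fun n (_ : ℝ) => c n) (fun _ => c0) atTop s := by
    rw [Metric.tendstoUniformlyOn_iff]
    intro ε hε
    filter_upwards [Metric.tendsto_nhds.mp hc ε hε] with n hn t _
    simpa [dist_comm] using hn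
  exact hcu.add h

lemma kappa_eq {θ : ℝ} (hθ : 0 < θ) : kappa θ = ∑' k : ℕ, 1 / (θ + k) ^ 2 := by
  set a : ℝ := θ/2 with ha
  set b : ℝ := θ+1 with hb
  have ha0 : 0 < a := by positivity
  set s : Set ℝ := Set.Ioo a b with hs
  have hθs : θ ∈ s := by constructor <;> [linarith; linarith]
  have htpos : ∀ t ∈ s, ∀ k : ℕ, (0:ℝ) < t + k := by
    intro t ht k
    have := ht.1
    have : (0:ℝ) ≤ (k:ℝ) := Nat.cast_nonneg k
    have := ht.1
    nlinarith [Nat.cast_nonneg (α := ℝ) k]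
  set f : ℕ → ℝ → ℝ := fun n t => t * Real.log n + Real.log (n.factorial : ℝ)
      - ∑ k ∈ range (n+1), Real.log (t + k) with hf
  set f1 : ℕ → ℝ → ℝ := fun n t => (Real.log n - (harmonic (n+1) : ℝ))
      + ∑ k ∈ range (n+1), (1/((k:ℝ)+1) - 1/(t+k)) with hf1
  set f2 : ℕ → ℝ → ℝ := fun n t => ∑ k ∈ range (n+1), 1/(t+k)^2 with hf2
  set ψ : ℝ → ℝ := fun t => -Real.eulerMascheroniConstant
      + ∑' k : ℕ, (1/((k:ℝ)+1) - 1/(t+k)) with hψ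
  have hharm : ∀ n : ℕ, (harmonic (n+1) : ℝ) = ∑ k ∈ range (n+1), 1/((k:ℝ)+1) := by
    intro n
    rw [harmonic]
    push_cast
    simp [one_div]
  -- derivative of f is f1
  have hd1 : ∀ n : ℕ, ∀ t ∈ s, HasDerivAt (f n) (f1 n t) t := by
    intro n t ht
    have h1 : HasDerivAt (fun t : ℝ => t * Real.log n + Real.log (n.factorial : ℝ)
        - ∑ k ∈ range (n+1), Real.log (t + k))
        (Real.log n - ∑ k ∈ range (n+1), 1/(t+k)) t := by
      apply HasDerivAt.sub
      · exact ((hasDerivAt_id t).mul_const (Real.log n)).add_const _ |>.congr_deriv (by ring)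
      · have : HasDerivAt (fun t : ℝ => ∑ k ∈ range (n+1), Real.log (t + k))
            (∑ k ∈ range (n+1), 1/(t+k)) t := by
          apply HasDerivAt.fun_sum
          intro k _
          have h2 : HasDerivAt (fun t : ℝ => t + k) 1 t := (hasDerivAt_id t).add_const _
          simpa using h2.log (htpos t ht k).ne'
        exact this
    convert h1 using 1
    simp only [hf1]
    rw [hharm n, Finset.sum_sub_distrib]
    ring
  -- derivative of f1 is f2
  have hd2 : ∀ n : ℕ, ∀ t ∈ s, HasDerivAt (f1 n) (f2 n t) t := by
    intro n t ht
    have h1 : HasDerivAt (fun t : ℝ => ∑ k ∈ range (n+1), (1/((k:ℝ)+1) - 1/(t+k)))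
        (∑ k ∈ range (n+1), 1/(t+k)^2) t := by
      apply HasDerivAt.fun_sum
      intro k _
      have h2 : HasDerivAt (fun t : ℝ => (t + k)⁻¹) (-1/(t+k)^2) t := by
        have := ((hasDerivAt_id t).add_const (k:ℝ)).inv (htpos t ht k).ne'
        exact this
      have h3 : HasDerivAt (fun t : ℝ => 1/((k:ℝ)+1) - 1/(t+k)) (1/(t+k)^2) t := by
        simp only [one_div]
        refine (h2.const_sub (((k:ℝ)+1)⁻¹)).congr_deriv ?_
        ring
      exact h3
    simpa [hf1, hf2] using h1.const_add (Real.log n - (harmonic (n+1) : ℝ))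
  -- uniform convergence pieces
  set m : ℝ := min a 1 with hm
  have hm0 : 0 < m := lt_min ha0 one_pos
  have hm1 : m ≤ 1 := min_le_right _ _
  have hma : m ≤ a := min_le_left _ _
  have hS : TendstoUniformlyOn (fun n t => ∑ k ∈ range n, (1/((k:ℝ)+1) - 1/(t+k)))
      (fun t => ∑' k : ℕ, (1/((k:ℝ)+1) - 1/(t+k))) atTop s := by
    apply tendstoUniformlyOn_tsum_nat (u := fun k => ((b+1)/m) * (1/((k:ℝ)+1)^2))
    · apply Summable.mul_left
      simpa [add_comm] using summable_inv_sq one_pos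
    · intro k t ht
      have h1 : 0 < t + k := htpos t ht k
      have hklt : m * ((k:ℝ)+1) ≤ t + k := by
        have := ht.1
        nlinarith [Nat.cast_nonneg (α := ℝ) k]
      have heq : 1/((k:ℝ)+1) - 1/(t+k) = (t-1)/(((k:ℝ)+1)*(t+k)) := by
        field_simp
        ring
      have habs : |t - 1| ≤ b + 1 := by
        rw [abs_le]
        constructor <;> [linarith [ht.1]; linarith [ht.2]]
      have hden : m*((k:ℝ)+1)^2 ≤ ((k:ℝ)+1)*(t+k) := by
        nlinarith [hklt, Nat.cast_nonneg (α := ℝ) k]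
      rw [Real.norm_eq_abs, heq, abs_div, abs_of_pos (mul_pos (show (0:ℝ) < (k:ℝ)+1 by positivity) h1)]
      calc |t-1| / (((k:ℝ)+1)*(t+k)) ≤ (b+1) / (m*((k:ℝ)+1)^2) :=
            div_le_div₀ (by positivity) habs (by positivity) hden
        _ = ((b+1)/m) * (1/((k:ℝ)+1)^2) := by field_simp
  have hA : Tendsto (fun n : ℕ => (harmonic (n+1) : ℝ) - Real.log ((n:ℝ)+1)) atTop
      (𝓝 Real.eulerMascheroniConstant) := by
    have := Real.tendsto_harmonic_sub_log.comp (tendsto_add_atTop_nat 1)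
    apply this.congr
    intro n
    simp only [Function.comp_apply]
    push_cast
    ring
  have hlog : Tendsto (fun n : ℕ => Real.log ((n:ℝ)+1) - Real.log n) atTop (𝓝 0) := by
    have h2 : Tendsto (fun n : ℕ => 1 + 1/(n:ℝ)) atTop (𝓝 1) := by
      simpa using (tendsto_const_nhds (x := (1:ℝ))).add tendsto_one_div_atTop_nhds_zero_nat
    have h3 := (Real.continuousAt_log one_ne_zero).tendsto.comp h2
    rw [Real.log_one] at h3
    apply h3.congr'
    filter_upwards [eventually_ge_atTop 1] with n hn
    have hn0 : (0:ℝ) < n := by exact_mod_cast hn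
    simp only [Function.comp]
    rw [show 1 + 1/(n:ℝ) = ((n:ℝ)+1)/n by field_simp, Real.log_div (by positivity) hn0.ne']
  have hc : Tendsto (fun n : ℕ => Real.log n - (harmonic (n+1):ℝ)) atTop
      (𝓝 (-Real.eulerMascheroniConstant)) := by
    have h := (hA.add hlog).neg
    rw [show -(Real.eulerMascheroniConstant + 0) = -Real.eulerMascheroniConstant by ring] at h
    apply h.congr
    intro n
    ring
  have hu1 : TendstoUniformlyOn f1 ψ atTop s := tuo_const_add hc (tuo_shift hS)
  have hpt : ∀ t ∈ s, Tendsto (fun n => f n t) atTop (𝓝 (Real.log (Real.Gamma t))) := by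
    intro t ht
    have ht0 : 0 < t := lt_trans ha0 ht.1
    have h1 : Tendsto (fun n => Real.log (Real.GammaSeq t n)) atTop
        (𝓝 (Real.log (Real.Gamma t))) :=
      ((Real.continuousAt_log (Real.Gamma_pos_of_pos ht0).ne').tendsto).comp
        (Real.GammaSeq_tendsto_Gamma t)
    apply h1.congr'
    filter_upwards [eventually_ge_atTop 1] with n hn
    have hn0 : (0:ℝ) < n := by exact_mod_cast hn
    have hprodne : ∀ j ∈ range (n+1), t + (j:ℝ) ≠ 0 := fun j _ => (htpos t ht j).ne'
    rw [Real.GammaSeq, Real.log_div (mul_ne_zero (Real.rpow_pos_of_pos hn0 t).ne'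
          (Nat.cast_ne_zero.mpr n.factorial_ne_zero)) (Finset.prod_ne_zero_iff.mpr hprodne),
        Real.log_mul (Real.rpow_pos_of_pos hn0 t).ne' (Nat.cast_ne_zero.mpr n.factorial_ne_zero),
        Real.log_rpow hn0, Real.log_prod hprodne]
  have hΓd : ∀ t ∈ s, HasDerivAt (fun u => Real.log (Real.Gamma u)) (ψ t) t := fun t ht =>
    hasDerivAt_of_tendstoUniformlyOn isOpen_Ioo hu1 (Eventually.of_forall hd1) hpt ht
  have hdig : ∀ t ∈ s, digamma t = ψ t := fun t ht => (hΓd t ht).deriv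
  have hu2 : TendstoUniformlyOn f2 (fun t => ∑' k : ℕ, 1/(t+k)^2) atTop s := by
    have base : TendstoUniformlyOn (fun (n : ℕ) (t : ℝ) => ∑ k ∈ range n, 1/(t+k)^2)
        (fun t => ∑' k : ℕ, 1/(t+k)^2) atTop s := by
      apply tendstoUniformlyOn_tsum_nat (summable_inv_sq ha0)
      intro k t ht
      have h1 : 0 < t + k := htpos t ht k
      have h2 : (a+(k:ℝ))^2 ≤ (t+k)^2 := by nlinarith [ht.1, Nat.cast_nonneg (α := ℝ) k]
      rw [Real.norm_eq_abs, abs_of_pos (one_div_pos.mpr (by positivity))]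
      exact one_div_le_one_div_of_le (by positivity) h2
    exact tuo_shift base
  have hψ' : HasDerivAt ψ (∑' k : ℕ, 1/(θ+k)^2) θ :=
    hasDerivAt_of_tendstoUniformlyOn isOpen_Ioo hu2 (Eventually.of_forall hd2)
      (fun t ht => hu1.tendsto_at ht) hθs
  have heq : digamma =ᶠ[𝓝 θ] ψ := Filter.eventuallyEq_of_mem (isOpen_Ioo.mem_nhds hθs) hdig
  rw [kappa, heq.deriv_eq, hψ'.deriv]

/-- For `θ > 0` and fixed `x ≥ θ`, `y ↦ g(x,y)` is strictly increasing on `(0,∞)`;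
its derivative is `Σ_{n=0}^∞ ( y/(θ+n)² - y/((x+n)²+y²) )`, which vanishes at `y = 0`
and is strictly positive for `y > 0`. -/
theorem gFun_vertical_deriv_and_strictMono (θ : ℝ) (hθ : 0 < θ) (x : ℝ) (hx : θ ≤ x) :
    (∀ y : ℝ, HasDerivAt (fun y => gFun θ x y)
        (∑' n : ℕ, (y / (θ + n) ^ 2 - y / ((x + n) ^ 2 + y ^ 2))) y)
    ∧ (∑' n : ℕ, ((0 : ℝ) / (θ + n) ^ 2 - 0 / ((x + n) ^ 2 + (0 : ℝ) ^ 2))) = 0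
    ∧ (∀ y : ℝ, 0 < y → 0 < ∑' n : ℕ, (y / (θ + n) ^ 2 - y / ((x + n) ^ 2 + y ^ 2)))
    ∧ StrictMonoOn (fun y => gFun θ x y) (Set.Ioi 0) := by
  have hx0 : 0 < x := lt_of_lt_of_le hθ hx
  have hupos : ∀ (k : ℕ) (y : ℝ), (0:ℝ) < (x+k)^2 + y^2 := fun k y => by positivity
  have hθpos : ∀ k : ℕ, (0:ℝ) < (θ+k)^2 := fun k => by positivity
  have SA : ∀ y : ℝ, Summable (fun n : ℕ => y / (θ + n) ^ 2) := by
    intro y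
    have := (summable_inv_sq hθ).mul_left y
    exact this.congr (fun n => by rw [mul_one_div])
  have SB : ∀ y : ℝ, Summable (fun n : ℕ => y / ((x + n) ^ 2 + y ^ 2)) := by
    intro y
    apply Summable.of_norm_bounded ((summable_inv_sq hx0).mul_left |y|)
    intro k
    rw [Real.norm_eq_abs, abs_div, abs_of_pos (hupos k y), mul_one_div]
    apply div_le_div₀ (by positivity) le_rfl (by positivity)
    nlinarith [sq_nonneg y]
  -- the derivative claim
  have hderiv : ∀ y : ℝ, HasDerivAt (fun y => gFun θ x y)
      (∑' n : ℕ, (y / (θ + n) ^ 2 - y / ((x + n) ^ 2 + y ^ 2))) y := by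
    intro y
    have h1 := hasDerivAt_log_abs_Gamma x hx0 y
    have h2 : HasDerivAt (fun t : ℝ => kappa θ / 2 * (x ^ 2 - t ^ 2))
        (kappa θ / 2 * (-(2 * y))) y := by
      have : HasDerivAt (fun t : ℝ => x ^ 2 - t ^ 2) (-(2 * y)) y := by
        simpa using (hasDerivAt_pow 2 y).const_sub (x^2)
      exact this.const_mul _
    have htot := (h1.add_const (fTheta θ * x)).sub h2
    have hfun : (fun t => gFun θ x t)
        = (fun t : ℝ => Real.log ‖Complex.Gamma ((x:ℂ) + (t:ℂ) * Complex.I)‖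
            + fTheta θ * x - kappa θ / 2 * (x ^ 2 - t ^ 2)) := by
      funext t
      simp [gFun, Complex.log_re]
    rw [hfun]
    refine htot.congr_deriv ?_
    rw [Summable.tsum_sub (SA y) (SB y), tsum_neg]
    have : ∑' (n : ℕ), y / (θ + n) ^ 2 = y * ∑' (k : ℕ), 1 / (θ + k) ^ 2 := by
      rw [← tsum_mul_left]
      exact tsum_congr fun n => by rw [mul_one_div]
    rw [this, ← kappa_eq hθ]
    ring
  have hpos3 : ∀ y : ℝ, 0 < y → 0 < ∑' n : ℕ, (y / (θ + n) ^ 2 - y / ((x + n) ^ 2 + y ^ 2)) := by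
    intro y hy
    have hpos : ∀ n : ℕ, 0 < y / (θ + n) ^ 2 - y / ((x + n) ^ 2 + y ^ 2) := by
      intro n
      have hlt : (θ+n)^2 < (x+n)^2 + y^2 := by nlinarith [Nat.cast_nonneg (α := ℝ) n]
      have := div_lt_div_of_pos_left hy (hθpos n) hlt
      linarith
    exact Summable.tsum_pos ((SA y).sub (SB y)) (fun n => (hpos n).le) 0 (hpos 0)
  refine ⟨hderiv, by simp, hpos3, ?_⟩
  have hcont : ContinuousOn (fun y => gFun θ x y) (Set.Ioi 0) :=
    fun y _ => (hderiv y).continuousAt.continuousWithinAt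
  apply strictMonoOn_of_deriv_pos (convex_Ioi 0) hcont
  intro y hy
  rw [interior_Ioi] at hy
  rw [(hderiv y).deriv]
  exact hpos3 y hy
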